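/- (Lemma 2.1) Let α be a positive integer, 0 < p = 1 - q < 1, z ≥ 0, and let g_z be the solution of the binomial Stein equation, i.e. g_z(0) = 0 and g_z(k) = -∑_{j=k}^{α} [(α-k)!/(α-j)!]·[(k-1)!/j!]·(p/q)^{j-k}·[(j-z)^+ - E(B_{α,p}-z)^+] for 1 ≤ k ≤ α, with g_z(α+1) = 0. Writing Δg_z(k) = g_z(k+1) - g_z(k), the following holds: |Δg_z(0)| ≤ 2q^{1-α} - q, and |Δg_z(k)| ≤ 2q^{k-α} for 1 ≤ k ≤ α. -/

import Mathlib

open Finset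

/-- `E[(B_{α,p} - z)^+]`, the expected call function of a binomial random variable
`B_{α,p}` with `P(B = j) = C(α,j) p^j (1-p)^{α-j}` for `j = 0,…,α`. -/
noncomputable def binomCallExp (α : ℕ) (p z : ℝ) : ℝ :=
  ∑ j ∈ Finset.range (α + 1),
    (α.choose j : ℝ) * p ^ j * (1 - p) ^ (α - j) * max ((j : ℝ) - z) 0

/-- `h₁(k) = ∑_{j=k}^{α} [(α-k)!/(α-j)!]·[(k-1)!/j!]·(p/q)^{j-k}·(j-z)^+` with `q = 1 - p`. -/
noncomputable def h1 (α : ℕ) (p z : ℝ) (k : ℕ) : ℝ :=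
  ∑ j ∈ Finset.Icc k α,
    ((α - k).factorial : ℝ) / ((α - j).factorial : ℝ) *
      (((k - 1).factorial : ℝ) / (j.factorial : ℝ)) *
        (p / (1 - p)) ^ (j - k) * max ((j : ℝ) - z) 0

/-- `h₂(k) = ∑_{j=k}^{α} [(α-k)!/(α-j)!]·[(k-1)!/j!]·(p/q)^{j-k}·E[(B_{α,p}-z)^+]`
with `q = 1 - p`. -/
noncomputable def h2 (α : ℕ) (p z : ℝ) (k : ℕ) : ℝ :=
  ∑ j ∈ Finset.Icc k α,
    ((α - k).factorial : ℝ) / ((α - j).factorial : ℝ) *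
      (((k - 1).factorial : ℝ) / (j.factorial : ℝ)) *
        (p / (1 - p)) ^ (j - k) * binomCallExp α p z

/-- The solution `g_z` of the binomial Stein equation: `g_z(0) = 0`,
`g_z(k) = -∑_{j=k}^{α} [(α-k)!/(α-j)!]·[(k-1)!/j!]·(p/q)^{j-k}·[(j-z)^+ - E(B_{α,p}-z)^+]`
for `1 ≤ k ≤ α`, extended by `g_z(k) = 0` for `k > α` (in particular `g_z(α+1) = 0`). -/
noncomputable def steinSol (α : ℕ) (p z : ℝ) (k : ℕ) : ℝ :=
  if k = 0 ∨ α < k then 0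
  else
    -∑ j ∈ Finset.Icc k α,
      ((α - k).factorial : ℝ) / ((α - j).factorial : ℝ) *
        (((k - 1).factorial : ℝ) / (j.factorial : ℝ)) *
          (p / (1 - p)) ^ (j - k) * (max ((j : ℝ) - z) 0 - binomCallExp α p z)



lemma sum_pmf (n : ℕ) (p : ℝ) : ∑ i ∈ range (n+1), (n.choose i : ℝ) * p^i * (1-p)^(n-i) = 1 := by
  have h := add_pow p (1-p) n
  simp only [add_sub_cancel, one_pow] at h
  calc ∑ i ∈ range (n+1), (n.choose i : ℝ) * p^i * (1-p)^(n-i)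
      = ∑ i ∈ range (n+1), p^i * (1-p)^(n-i) * (n.choose i : ℝ) :=
        Finset.sum_congr rfl (fun i _ => by ring)
    _ = 1 := h.symm

lemma sum_mean (n : ℕ) (p : ℝ) :
    ∑ j ∈ range (n+2), (Nat.choose (n+1) j : ℝ) * p^j * (1-p)^(n+1-j) * j = (n+1) * p := by
  rw [Finset.sum_range_succ']
  simp only [Nat.cast_zero, mul_zero, add_zero, Nat.cast_add, Nat.cast_one]
  have : ∀ i ∈ range (n+1), (Nat.choose (n+1) (i+1) : ℝ) * p^(i+1) * (1-p)^(n+1-(i+1)) * ((i:ℝ)+1)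
      = ((n+1) * p) * ((Nat.choose n i : ℝ) * p^i * (1-p)^(n-i)) := by
    intro i hi
    have h1 : (n+1) * Nat.choose n i = Nat.choose (n+1) (i+1) * (i+1) := Nat.add_one_mul_choose_eq n i
    have h1' : ((n:ℝ)+1) * (Nat.choose n i : ℝ) = (Nat.choose (n+1) (i+1) : ℝ) * ((i:ℝ)+1) := by
      exact_mod_cast congrArg (Nat.cast : ℕ → ℝ) h1
    have h2 : n+1-(i+1) = n - i := by omega
    rw [h2, pow_succ]
    linear_combination (-(p^i * p * (1-p)^(n-i))) * h1'
  rw [Finset.sum_congr rfl this, ← Finset.mul_sum, sum_pmf n p, mul_one]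

lemma coeff_eq (α k j : ℕ) (hk : 1 ≤ k) (hkj : k ≤ j) (hj : j ≤ α) (p : ℝ) (hq : 1 - p ≠ 0) :
    ((α-k).factorial : ℝ)/((α-j).factorial : ℝ) * (((k-1).factorial : ℝ)/(j.factorial : ℝ)) *
      (p/(1-p))^(j-k) * ((k:ℝ) * ((α.choose k:ℝ) * p^k * (1-p)^(α-k)))
    = (α.choose j : ℝ) * p^j * (1-p)^(α-j) := by
  have hnat : (α - k).factorial * (k-1).factorial * (k * α.choose k)
      = α.choose j * ((α-j).factorial * j.factorial) := by
    have h1 := Nat.choose_mul_factorial_mul_factorial (hkj.trans hj)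
    have h2 := Nat.choose_mul_factorial_mul_factorial hj
    have h3 : k * (k-1).factorial = k.factorial := Nat.mul_factorial_pred (by omega)
    calc (α - k).factorial * (k-1).factorial * (k * α.choose k)
        = α.choose k * (k * (k-1).factorial) * (α-k).factorial := by ring
      _ = α.choose k * k.factorial * (α-k).factorial := by rw [h3]
      _ = α.factorial := h1
      _ = α.choose j * j.factorial * (α-j).factorial := h2.symm
      _ = α.choose j * ((α-j).factorial * j.factorial) := by ring
  have hnat' : ((α - k).factorial : ℝ) * ((k-1).factorial : ℝ) * ((k:ℝ) * (α.choose k : ℝ))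
      = (α.choose j : ℝ) * (((α-j).factorial : ℝ) * (j.factorial : ℝ)) := by
    exact_mod_cast congrArg (Nat.cast : ℕ → ℝ) hnat
  have e1 : p ^ j = p^(j-k) * p^k := by rw [← pow_add]; congr 1; omega
  have e2 : (1-p)^(α-k) = (1-p)^(j-k) * (1-p)^(α-j) := by rw [← pow_add]; congr 1; omega
  rw [div_pow, e1, e2]
  have hb : ((α-j).factorial : ℝ) ≠ 0 := Nat.cast_ne_zero.mpr (Nat.factorial_ne_zero _)
  have hd : ((j).factorial : ℝ) ≠ 0 := Nat.cast_ne_zero.mpr (Nat.factorial_ne_zero _)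
  have hqt : (1-p)^(j-k) ≠ 0 := pow_ne_zero _ hq
  field_simp
  linear_combination (p^(j-k) * p^k) * hnat'

lemma tail_bound (m l : ℕ) (hl : l ≤ m) (p : ℝ) (hp : 0 ≤ p) (hq : 0 < 1 - p) :
    (1-p)^(m-l) * ∑ i ∈ Icc l m, (Nat.choose m i : ℝ) * p^i * (1-p)^(m-i)
      ≤ (Nat.choose m l : ℝ) * p^l * (1-p)^(m-l) := by
  rw [Finset.mul_sum]
  have key : ∀ i ∈ Icc l m, (1-p)^(m-l) * ((Nat.choose m i : ℝ) * p^i * (1-p)^(m-i))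
      ≤ ((Nat.choose m l : ℝ) * p^l * (1-p)^(m-l)) *
        ((Nat.choose (m-l) (i-l) : ℝ) * p^(i-l) * (1-p)^(m-i)) := by
    intro i hi
    rw [Finset.mem_Icc] at hi
    obtain ⟨hli, him⟩ := hi
    have hc : Nat.choose m i ≤ Nat.choose m l * Nat.choose (m-l) (i-l) := by
      have h1 : Nat.choose m i * Nat.choose i l = Nat.choose m l * Nat.choose (m-l) (i-l) :=
        Nat.choose_mul hli
      have h2 : 1 ≤ Nat.choose i l := Nat.choose_pos hli
      calc Nat.choose m i = Nat.choose m i * 1 := (mul_one _).symm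
        _ ≤ Nat.choose m i * Nat.choose i l := Nat.mul_le_mul_left _ h2
        _ = _ := h1
    have hc' : (Nat.choose m i : ℝ) ≤ (Nat.choose m l : ℝ) * (Nat.choose (m-l) (i-l) : ℝ) := by
      exact_mod_cast hc
    have e1 : p ^ l * p ^ (i-l) = p ^ i := by rw [← pow_add]; congr 1; omega
    have hnn : (0:ℝ) ≤ p^i * ((1-p)^(m-i) * (1-p)^(m-l)) :=
      mul_nonneg (pow_nonneg hp _) (mul_nonneg (pow_nonneg hq.le _) (pow_nonneg hq.le _))
    calc (1-p)^(m-l) * ((Nat.choose m i : ℝ) * p^i * (1-p)^(m-i))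
        = (Nat.choose m i : ℝ) * (p^i * ((1-p)^(m-i) * (1-p)^(m-l))) := by ring
      _ ≤ ((Nat.choose m l : ℝ) * (Nat.choose (m-l) (i-l) : ℝ)) *
            (p^i * ((1-p)^(m-i) * (1-p)^(m-l))) := mul_le_mul_of_nonneg_right hc' hnn
      _ = ((Nat.choose m l : ℝ) * p^l * (1-p)^(m-l)) *
            ((Nat.choose (m-l) (i-l) : ℝ) * p^(i-l) * (1-p)^(m-i)) := by
          rw [← e1]; ring
  calc ∑ i ∈ Icc l m, (1-p)^(m-l) * ((Nat.choose m i : ℝ) * p^i * (1-p)^(m-i))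
      ≤ ∑ i ∈ Icc l m, ((Nat.choose m l : ℝ) * p^l * (1-p)^(m-l)) *
          ((Nat.choose (m-l) (i-l) : ℝ) * p^(i-l) * (1-p)^(m-i)) := Finset.sum_le_sum key
    _ = ((Nat.choose m l : ℝ) * p^l * (1-p)^(m-l)) *
          ∑ i ∈ Icc l m, (Nat.choose (m-l) (i-l) : ℝ) * p^(i-l) * (1-p)^(m-i) := by
        rw [Finset.mul_sum]
    _ = ((Nat.choose m l : ℝ) * p^l * (1-p)^(m-l)) * 1 := by
        congr 1
        have : Icc l m = Ico l (m+1) := by rw [Finset.Ico_add_one_right_eq_Icc]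
        rw [this, Finset.sum_Ico_eq_sum_range]
        have hrw : m + 1 - l = (m - l) + 1 := by omega
        rw [hrw]
        rw [Finset.sum_congr rfl (fun t (ht : t ∈ range (m-l+1)) => by
          have e : l + t - l = t := by omega
          have e2 : m - (l+t) = m - l - t := by omega
          rw [e, e2] :
          ∀ t ∈ range (m-l+1), (Nat.choose (m-l) (l+t-l) : ℝ) * p^(l+t-l) * (1-p)^(m-(l+t))
            = (Nat.choose (m-l) t : ℝ) * p^t * (1-p)^((m-l)-t))]
        exact sum_pmf (m-l) p
    _ = _ := mul_one _



lemma shift_sum (m l : ℕ) (f : ℕ → ℝ) :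
    ∑ j ∈ Icc (l+1) (m+1), f j = ∑ i ∈ Icc l m, f (i+1) := by
  rw [← Finset.Ico_add_one_right_eq_Icc, ← Finset.Ico_add_one_right_eq_Icc, Finset.sum_Ico_eq_sum_range,
    Finset.sum_Ico_eq_sum_range]
  have h : m + 1 + 1 - (l+1) = m + 1 - l := by omega
  rw [h]
  exact Finset.sum_congr rfl (fun t _ => by rw [show l+1+t = l+t+1 by omega])

lemma pascal_term (m i : ℕ) (p : ℝ) (him : i ≤ m) :
    (Nat.choose (m+1) (i+1):ℝ) * p^(i+1) * (1-p)^(m+1-(i+1)) =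
      p * ((Nat.choose m i:ℝ) * p^i * (1-p)^(m-i)) +
        (1-p) * ((Nat.choose m (i+1):ℝ) * p^(i+1) * (1-p)^(m-(i+1))) := by
  have hch : Nat.choose (m+1) (i+1) = Nat.choose m i + Nat.choose m (i+1) :=
    Nat.choose_succ_succ' m i
  rcases eq_or_lt_of_le him with rfl | hlt
  · simp [Nat.choose_succ_self, Nat.choose_self]
    ring
  · have e1 : m+1-(i+1) = m - i := by omega
    have e2 : m - i = (m - (i+1)) + 1 := by omega
    rw [hch, e1, e2]
    push_cast
    ring

lemma mean_term (m i : ℕ) (p : ℝ) :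
    (Nat.choose (m+1) (i+1):ℝ) * p^(i+1) * (1-p)^(m+1-(i+1)) * ((i:ℝ)+1)
      = ((m:ℝ)+1) * p * ((Nat.choose m i:ℝ) * p^i * (1-p)^(m-i)) := by
  have h1' : ((m:ℝ)+1) * (Nat.choose m i:ℝ) = (Nat.choose (m+1) (i+1):ℝ) * ((i:ℝ)+1) := by
    exact_mod_cast congrArg (Nat.cast : ℕ → ℝ) (Nat.add_one_mul_choose_eq m i)
  have e : m+1-(i+1) = m-i := by omega
  rw [e, pow_succ]
  linear_combination (-(p^i*p*(1-p)^(m-i))) * h1'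

lemma abs_steinSol_le (m : ℕ) (p : ℝ) (hp : 0 < p) (hp1 : p < 1) (z : ℝ) (hz : 0 ≤ z)
    (k : ℕ) (hk1 : 1 ≤ k) (hk2 : k ≤ m + 1) :
    |steinSol (m+1) p z k| ≤ (1-p) ^ ((k:ℤ) - ((m:ℤ)+1)) := by
  obtain ⟨l, rfl⟩ : ∃ l, k = l + 1 := ⟨k - 1, by omega⟩
  have hlm : l ≤ m := by omega
  have hq : 0 < 1 - p := by linarith
  set f : ℕ → ℝ := fun j => max ((j:ℝ) - z) 0 with hf
  set Q : ℕ → ℝ := fun j => (Nat.choose (m+1) j : ℝ) * p^j * (1-p)^(m+1-j) with hQ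
  set Q' : ℕ → ℝ := fun i => (Nat.choose m i : ℝ) * p^i * (1-p)^(m-i) with hQ'
  set E : ℝ := binomCallExp (m+1) p z with hE
  have hQpos : ∀ j, 0 ≤ Q j := fun j =>
    mul_nonneg (mul_nonneg (Nat.cast_nonneg _) (pow_nonneg hp.le _)) (pow_nonneg hq.le _)
  have hQ'pos : ∀ i, 0 ≤ Q' i := fun i =>
    mul_nonneg (mul_nonneg (Nat.cast_nonneg _) (pow_nonneg hp.le _)) (pow_nonneg hq.le _)
  have hfpos : ∀ j : ℕ, 0 ≤ f j := fun j => le_max_right _ _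
  have hfle : ∀ j : ℕ, f j ≤ (j : ℝ) := fun j => max_le (by linarith [Nat.cast_nonneg (α := ℝ) j]) (Nat.cast_nonneg j)
  -- the Stein solution unfolded
  have hgs : steinSol (m+1) p z (l+1) =
      -∑ j ∈ Icc (l+1) (m+1),
        ((m+1-(l+1)).factorial : ℝ) / ((m+1-j).factorial : ℝ) *
          (((l+1-1).factorial : ℝ) / (j.factorial : ℝ)) *
            (p / (1-p)) ^ (j-(l+1)) * (f j - E) := by
    rw [steinSol, if_neg (by omega)]
  -- D = (l+1) * Q (l+1)
  set D : ℝ := ((l:ℝ)+1) * Q (l+1) with hD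
  have hDpos : 0 < D := by
    have : (0:ℝ) < (Nat.choose (m+1) (l+1) : ℝ) :=
      Nat.cast_pos.mpr (Nat.choose_pos (by omega))
    have := mul_pos (mul_pos this (pow_pos hp (l+1))) (pow_pos hq (m+1-(l+1)))
    have hl1 : (0:ℝ) < (l:ℝ)+1 := by positivity
    exact mul_pos hl1 this
  -- steinSol * D = - sum Q j (f j - E)
  have hmain : steinSol (m+1) p z (l+1) * D = -∑ j ∈ Icc (l+1) (m+1), Q j * (f j - E) := by
    rw [hgs, neg_mul, Finset.sum_mul, neg_inj]
    refine Finset.sum_congr rfl (fun j hj => ?_)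
    rw [Finset.mem_Icc] at hj
    have hc := coeff_eq (m+1) (l+1) j (by omega) hj.1 hj.2 p (ne_of_gt hq)
    have hcast : ((l+1 : ℕ) : ℝ) = (l:ℝ)+1 := by push_cast; ring
    calc ((m+1-(l+1)).factorial : ℝ) / ((m+1-j).factorial : ℝ) *
          (((l+1-1).factorial : ℝ) / (j.factorial : ℝ)) *
            (p / (1-p)) ^ (j-(l+1)) * (f j - E) * D
        = ((m+1-(l+1)).factorial : ℝ) / ((m+1-j).factorial : ℝ) *
          (((l+1-1).factorial : ℝ) / (j.factorial : ℝ)) *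
            (p / (1-p)) ^ (j-(l+1)) * (((l+1:ℕ):ℝ) * ((Nat.choose (m+1) (l+1) : ℝ) * p^(l+1) * (1-p)^(m+1-(l+1)))) * (f j - E) := by
          rw [hcast]; simp only [hD, hQ]; try ring
      _ = Q j * (f j - E) := by rw [hc]
  -- bounding the weighted sum
  set T : ℝ := ∑ i ∈ Icc l m, Q' i with hT
  have hTpos : 0 ≤ T := Finset.sum_nonneg (fun i _ => hQ'pos i)
  have hEnn : 0 ≤ E := Finset.sum_nonneg (fun j _ => mul_nonneg (hQpos j) (hfpos j))
  have hEle : E ≤ ((m:ℝ)+1) * p := by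
    have h1 : E ≤ ∑ j ∈ range (m+2), Q j * (j:ℝ) := by
      refine Finset.sum_le_sum (fun j _ => ?_)
      exact mul_le_mul_of_nonneg_left (hfle j) (hQpos j)
    have h2 := sum_mean m p
    calc E ≤ ∑ j ∈ range (m+2), Q j * (j:ℝ) := h1
      _ = ((m:ℝ)+1) * p := by rw [← h2]
  have hS1 : ∑ j ∈ Icc (l+1) (m+1), Q j * f j ≤ ((m:ℝ)+1) * p * T := by
    have h1 : ∑ j ∈ Icc (l+1) (m+1), Q j * f j ≤ ∑ j ∈ Icc (l+1) (m+1), Q j * (j:ℝ) :=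
      Finset.sum_le_sum (fun j _ => mul_le_mul_of_nonneg_left (hfle j) (hQpos j))
    have h2 : ∑ j ∈ Icc (l+1) (m+1), Q j * (j:ℝ) = ∑ i ∈ Icc l m, Q (i+1) * ((i:ℝ)+1) := by
      rw [shift_sum m l (fun j => Q j * (j:ℝ))]
      exact Finset.sum_congr rfl (fun i _ => by push_cast; ring)
    have h3 : ∑ i ∈ Icc l m, Q (i+1) * ((i:ℝ)+1) = ((m:ℝ)+1) * p * T := by
      rw [hT, Finset.mul_sum]
      exact Finset.sum_congr rfl (fun i _ => mean_term m i p)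
    linarith
  have hQsum : ∑ j ∈ Icc (l+1) (m+1), Q j ≤ T := by
    rw [shift_sum m l Q]
    have h1 : ∀ i ∈ Icc l m, Q (i+1) = p * Q' i + (1-p) * Q' (i+1) := by
      intro i hi
      rw [Finset.mem_Icc] at hi
      exact pascal_term m i p hi.2
    rw [Finset.sum_congr rfl h1, Finset.sum_add_distrib, ← Finset.mul_sum, ← Finset.mul_sum]
    have h2 : ∑ i ∈ Icc l m, Q' (i+1) ≤ T := by
      rw [← shift_sum m l Q']
      have h3 : Q' (m+1) = 0 := by
        simp [hQ', Nat.choose_succ_self]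
      have h4 : ∑ j ∈ Icc (l+1) (m+1), Q' j = ∑ j ∈ Icc (l+1) m, Q' j := by
        rw [← Finset.Ico_add_one_right_eq_Icc, Finset.sum_Ico_succ_top (by omega), Finset.Ico_add_one_right_eq_Icc, h3,
          add_zero]
      rw [h4]
      exact Finset.sum_le_sum_of_subset_of_nonneg
        (Finset.Icc_subset_Icc (by omega) le_rfl) (fun i _ _ => hQ'pos i)
    nlinarith [hq, hp, hTpos]
  have habs : |∑ j ∈ Icc (l+1) (m+1), Q j * (f j - E)| ≤ ((m:ℝ)+1) * p * T := by
    have hsplit : ∑ j ∈ Icc (l+1) (m+1), Q j * (f j - E)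
        = (∑ j ∈ Icc (l+1) (m+1), Q j * f j) - (∑ j ∈ Icc (l+1) (m+1), Q j) * E := by
      rw [Finset.sum_mul]
      rw [← Finset.sum_sub_distrib]
      exact Finset.sum_congr rfl (fun j _ => by ring)
    rw [hsplit, abs_le]
    have hA : 0 ≤ ∑ j ∈ Icc (l+1) (m+1), Q j * f j :=
      Finset.sum_nonneg (fun j _ => mul_nonneg (hQpos j) (hfpos j))
    have hB : 0 ≤ (∑ j ∈ Icc (l+1) (m+1), Q j) * E :=
      mul_nonneg (Finset.sum_nonneg (fun j _ => hQpos j)) hEnn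
    have hBle : (∑ j ∈ Icc (l+1) (m+1), Q j) * E ≤ ((m:ℝ)+1) * p * T := by
      calc (∑ j ∈ Icc (l+1) (m+1), Q j) * E ≤ T * (((m:ℝ)+1) * p) :=
            mul_le_mul hQsum hEle hEnn hTpos
        _ = ((m:ℝ)+1) * p * T := by ring
    constructor <;> linarith
  -- combine
  have htail := tail_bound m l hlm p hp.le hq
  have hDeq : D = ((m:ℝ)+1) * p * Q' l := by
    have h1' : ((m:ℝ)+1) * (Nat.choose m l:ℝ) = (Nat.choose (m+1) (l+1):ℝ) * ((l:ℝ)+1) := by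
      exact_mod_cast congrArg (Nat.cast : ℕ → ℝ) (Nat.add_one_mul_choose_eq m l)
    have e : m+1-(l+1) = m-l := by omega
    simp only [hD, hQ, hQ', e, pow_succ]
    linear_combination (-(p^l*p*(1-p)^(m-l))) * h1'
  have hgoal : |steinSol (m+1) p z (l+1)| * (1-p)^(m-l) ≤ 1 := by
    have h1 : |steinSol (m+1) p z (l+1)| * D = |∑ j ∈ Icc (l+1) (m+1), Q j * (f j - E)| := by
      rw [← abs_of_pos hDpos, ← abs_mul, hmain, abs_neg]
    have h2 : |steinSol (m+1) p z (l+1)| * D * (1-p)^(m-l) ≤ ((m:ℝ)+1)*p*T*(1-p)^(m-l) := by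
      rw [h1]
      exact mul_le_mul_of_nonneg_right habs (pow_nonneg hq.le _)
    have h3 : ((m:ℝ)+1)*p*T*(1-p)^(m-l) ≤ D := by
      rw [hDeq]
      have : (1-p)^(m-l) * T ≤ Q' l := htail
      nlinarith [hp, Nat.cast_nonneg (α := ℝ) m]
    rw [← mul_le_mul_iff_left₀ hDpos]
    calc |steinSol (m+1) p z (l+1)| * (1-p)^(m-l) * D
        = |steinSol (m+1) p z (l+1)| * D * (1-p)^(m-l) := by ring
      _ ≤ D := le_trans h2 h3
      _ = 1 * D := (one_mul D).symm
  have hexp : ((l+1 : ℕ):ℤ) - ((m:ℤ)+1) = -((m-l : ℕ):ℤ) := by push_cast; omega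
  rw [hexp, zpow_neg, zpow_natCast]
  rw [← one_div, le_div_iff₀ (pow_pos hq _)]
  exact hgoal

/-- Lemma 2.1: for `z ≥ 0` and the Stein solution `g_z`, writing
`Δg_z(k) = g_z(k+1) - g_z(k)`, one has
`|Δg_z(0)| ≤ 2q^{1-α} - q` and `|Δg_z(k)| ≤ 2q^{k-α}` for `1 ≤ k ≤ α`. -/
theorem steinSol_diff_nonuniform_bound (α : ℕ) (hα : 0 < α) (p q : ℝ)
    (hq : q = 1 - p) (hp : 0 < p) (hp1 : p < 1) (z : ℝ) (hz : 0 ≤ z) :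
    |steinSol α p z 1 - steinSol α p z 0| ≤ 2 * q ^ ((1 : ℤ) - (α : ℤ)) - q ∧
      ∀ k, 1 ≤ k → k ≤ α →
        |steinSol α p z (k + 1) - steinSol α p z k| ≤ 2 * q ^ ((k : ℤ) - (α : ℤ)) := by
  obtain ⟨m, rfl⟩ : ∃ m, α = m + 1 := ⟨α - 1, by omega⟩
  subst hq
  have hq0 : 0 < 1 - p := by linarith
  have hcast : (((m+1 : ℕ)):ℤ) = (m:ℤ) + 1 := by push_cast; ring
  constructor
  · have h0 : steinSol (m+1) p z 0 = 0 := by rw [steinSol, if_pos (Or.inl rfl)]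
    rw [h0, sub_zero, hcast]
    have h1 := abs_steinSol_le m p hp hp1 z hz 1 le_rfl (by omega)
    have hz1 : (1:ℝ) ≤ (1-p) ^ ((1:ℤ) - ((m:ℤ)+1)) := by
      have he : (1:ℤ) - ((m:ℤ)+1) = -(m:ℤ) := by ring
      rw [he, zpow_neg, zpow_natCast]
      have hle : (1-p)^m ≤ 1 := pow_le_one₀ hq0.le (by linarith)
      exact (one_le_inv₀ (pow_pos hq0 m)).mpr hle
    have hcast1 : ((1:ℕ):ℤ) = (1:ℤ) := by norm_num
    rw [hcast1] at h1
    linarith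
  · intro k hk1 hk2
    rcases eq_or_lt_of_le hk2 with rfl | hlt
    · have h0 : steinSol (m+1) p z (m+1+1) = 0 := by
        rw [steinSol, if_pos (Or.inr (by omega))]
      rw [h0, zero_sub, abs_neg]
      have h1 := abs_steinSol_le m p hp hp1 z hz (m+1) (by omega) le_rfl
      have he : (((m+1:ℕ)):ℤ) - ((m:ℤ)+1) = 0 := by push_cast; ring
      rw [he, zpow_zero] at h1
      have he2 : (((m+1:ℕ)):ℤ) - (((m+1:ℕ)):ℤ) = 0 := by ring
      rw [he2, zpow_zero]
      linarith
    · have hkm : k ≤ m := by omega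
      have ha := abs_steinSol_le m p hp hp1 z hz k hk1 (by omega)
      have hb := abs_steinSol_le m p hp hp1 z hz (k+1) (by omega) (by omega)
      set X : ℝ := (1-p) ^ ((k:ℤ) - ((m:ℤ)+1)) with hX
      have hXpos : 0 < X := zpow_pos hq0 _
      have hb' : (1-p) ^ ((((k+1):ℕ):ℤ) - ((m:ℤ)+1)) = X * (1-p) := by
        have he : (((k+1:ℕ)):ℤ) - ((m:ℤ)+1) = ((k:ℤ) - ((m:ℤ)+1)) + 1 := by push_cast; ring
        rw [he, zpow_add_one₀ (ne_of_gt hq0), hX]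
      rw [hb'] at hb
      have htri : |steinSol (m+1) p z (k+1) - steinSol (m+1) p z k|
          ≤ |steinSol (m+1) p z (k+1)| + |steinSol (m+1) p z k| := abs_sub _ _
      rw [hcast]
      nlinarith [hq0, hXpos]
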